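/- Under the setting of the previous statement, additionally define $\Gamma = (MU)^\dagger - (MU)^H$ and $r = U^\perp (U^\perp)^H y$. Then $\|\hat b_{\rm ols} - \hat b_M\|_2^2 \le \frac{2}{\sigma_{\min}(X)^2}\left(\|U^H M^H M r\|_2^2 + \|\Gamma\|_2^2 \|M r\|_2^2\right)$, where $\sigma_{\min}(X)$ is the smallest singular value of $X$. -/

import Mathlib

open Finset Matrix
open scoped Matrix.Norms.L2Operator

/-- `B` is a Moore–Penrose pseudoinverse of `A`. -/
def IsMoorePenroseInv {m n : ℕ} (A : Matrix (Fin m) (Fin n) ℂ)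
    (B : Matrix (Fin n) (Fin m) ℂ) : Prop :=
  A * B * A = A ∧ B * A * B = B ∧ (A * B)ᴴ = A * B ∧ (B * A)ᴴ = B * A

/-- Uniqueness of the Moore–Penrose pseudoinverse. -/
lemma mp_unique {m n : ℕ} {A : Matrix (Fin m) (Fin n) ℂ} {B B' : Matrix (Fin n) (Fin m) ℂ}
    (hB : IsMoorePenroseInv A B) (hB' : IsMoorePenroseInv A B') : B = B' := by
  obtain ⟨h1, h2, h3, h4⟩ := hB
  obtain ⟨h1', h2', h3', h4'⟩ := hB'
  have ab : Bᴴ * Aᴴ = A * B := by rw [← conjTranspose_mul, h3]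
  have ba : Aᴴ * Bᴴ = B * A := by rw [← conjTranspose_mul, h4]
  have ab' : B'ᴴ * Aᴴ = A * B' := by rw [← conjTranspose_mul, h3']
  have ba' : Aᴴ * B'ᴴ = B' * A := by rw [← conjTranspose_mul, h4']
  have k1 : Aᴴ = Aᴴ * (A * B') := by
    conv_lhs => rw [← h1']
    rw [conjTranspose_mul, h3']
  have k2 : Aᴴ = (B * A) * Aᴴ := by
    conv_lhs => rw [← h1]
    rw [conjTranspose_mul, conjTranspose_mul, ← Matrix.mul_assoc, ba]
  have e1 : B = B * A * B' := by
    calc B = B * A * B := h2.symm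
    _ = B * (Bᴴ * Aᴴ) := by rw [Matrix.mul_assoc, ab]
    _ = B * (Bᴴ * (Aᴴ * (A * B'))) := by rw [← k1]
    _ = B * (Bᴴ * Aᴴ) * (A * B') := by simp only [Matrix.mul_assoc]
    _ = B * (A * B') := by rw [ab, ← Matrix.mul_assoc B A B, h2]
    _ = B * A * B' := by rw [Matrix.mul_assoc]
  have e2 : B' = B * A * B' := by
    calc B' = B' * A * B' := h2'.symm
    _ = Aᴴ * B'ᴴ * B' := by rw [ba']
    _ = (B * A) * Aᴴ * B'ᴴ * B' := by rw [← k2]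
    _ = B * (A * (Aᴴ * B'ᴴ)) * B' := by simp only [Matrix.mul_assoc]
    _ = B * (A * (B' * A)) * B' := by rw [ba']
    _ = B * A * (B' * A * B') := by simp only [Matrix.mul_assoc]
    _ = B * A * B' := by rw [h2']
  rw [e1, ← e2]

/-- A square matrix of full rank is a unit. -/
lemma isUnit_of_rank_eq {p : ℕ} (P : Matrix (Fin p) (Fin p) ℂ) (h : P.rank = p) : IsUnit P := by
  rw [← Matrix.mulVec_injective_iff_isUnit]
  have hsurj : Function.Surjective P.mulVecLin := by
    rw [← LinearMap.range_eq_top]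
    apply Submodule.eq_top_of_finrank_eq
    rw [Module.finrank_fintype_fun_eq_card, Fintype.card_fin, ← Matrix.rank]
    exact h
  exact (LinearMap.injective_iff_surjective).mpr hsurj

lemma tri_cancel {k l m : ℕ} {A : Matrix (Fin k) (Fin l) ℂ} {B : Matrix (Fin l) (Fin k) ℂ}
    (h : A * B = 1) (C : Matrix (Fin k) (Fin m) ℂ) : A * (B * C) = C := by
  rw [← Matrix.mul_assoc, h, Matrix.one_mul]

lemma dot_eq {k : ℕ} (w : Fin k → ℂ) : star w ⬝ᵥ w = ((∑ i, ‖w i‖^2 : ℝ) : ℂ) := by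
  push_cast
  simp [dotProduct, ← Complex.normSq_eq_conj_mul_self, Complex.normSq_eq_norm_sq]

lemma isometry_sum {k l : ℕ} {A : Matrix (Fin k) (Fin l) ℂ} (hA : Aᴴ * A = 1) (w : Fin l → ℂ) :
    ∑ i, ‖(A *ᵥ w) i‖^2 = ∑ i, ‖w i‖^2 := by
  have h : star (A *ᵥ w) ⬝ᵥ (A *ᵥ w) = star w ⬝ᵥ w := by
    rw [Matrix.star_mulVec, Matrix.dotProduct_mulVec, Matrix.vecMul_vecMul, hA,
      Matrix.vecMul_one]
  have h2 := (dot_eq (A *ᵥ w)).symm.trans (h.trans (dot_eq w))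
  exact_mod_cast h2

lemma opnorm_sum {k l : ℕ} (A : Matrix (Fin k) (Fin l) ℂ) (w : Fin l → ℂ) :
    ∑ i, ‖(A *ᵥ w) i‖^2 ≤ ‖A‖^2 * ∑ i, ‖w i‖^2 := by
  have h := Matrix.l2_opNorm_mulVec A ((WithLp.equiv 2 (Fin l → ℂ)).symm w)
  rw [EuclideanSpace.norm_eq, EuclideanSpace.norm_eq] at h
  have e : A *ᵥ ((WithLp.equiv 2 (Fin l → ℂ)).symm w) = A *ᵥ w := rfl
  simp only [EuclideanSpace.equiv, PiLp.continuousLinearEquiv_symm_apply,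
    WithLp.equiv_symm_apply, e] at h
  have h1 : (0:ℝ) ≤ ∑ i, ‖(A *ᵥ w) i‖^2 := by positivity
  have h2 : (0:ℝ) ≤ ∑ i, ‖w i‖^2 := by positivity
  have h3 : (0:ℝ) ≤ ‖A‖ := norm_nonneg _
  nlinarith [Real.sq_sqrt h1, Real.sq_sqrt h2, Real.sqrt_nonneg (∑ i, ‖(A *ᵥ w) i‖^2),
    Real.sqrt_nonneg (∑ i, ‖w i‖^2)]

lemma pointwise_bound {σ sk : ℝ} (hσ : 0 < σ) (hsk : σ ≤ sk) (u v w : ℂ)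
    (hw : ‖w‖ ≤ ‖u‖ + ‖v‖) :
    ‖((sk : ℂ))⁻¹ * w‖^2 ≤ σ⁻¹^2 * (2 * ‖u‖^2 + 2 * ‖v‖^2) := by
  have hsk0 : 0 < sk := lt_of_lt_of_le hσ hsk
  have e1 : ‖((sk : ℂ))⁻¹‖ = sk⁻¹ := by
    rw [norm_inv]
    simp [Complex.norm_real, abs_of_pos hsk0]
  have e3 : sk⁻¹ ≤ σ⁻¹ := inv_anti₀ hσ hsk
  have e4 : (0:ℝ) ≤ sk⁻¹ := le_of_lt (inv_pos.mpr hsk0)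
  rw [norm_mul, e1]
  have h1 : sk⁻¹ * ‖w‖ ≤ σ⁻¹ * ‖w‖ := mul_le_mul_of_nonneg_right e3 (norm_nonneg w)
  have h2 : σ⁻¹ * ‖w‖ ≤ σ⁻¹ * (‖u‖ + ‖v‖) := by
    apply mul_le_mul_of_nonneg_left hw (by positivity)
  calc (sk⁻¹ * ‖w‖)^2 ≤ (σ⁻¹ * (‖u‖ + ‖v‖))^2 := by
        apply pow_le_pow_left₀ (by positivity) (le_trans h1 h2)
    _ = σ⁻¹^2 * (‖u‖ + ‖v‖)^2 := by ring
    _ ≤ σ⁻¹^2 * (2 * ‖u‖^2 + 2 * ‖v‖^2) := by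
        apply mul_le_mul_of_nonneg_left _ (by positivity)
        nlinarith [sq_nonneg (‖u‖ - ‖v‖)]

/-- Key inequality in the proof of Theorem 5.1 (matrix version): with
`Γ = (MU)† - (MU)ᴴ` and `r = U^⊥ (U^⊥)ᴴ y`,
`‖b̂_ols - b̂_M‖₂² ≤ (2/σ_min(X)²) (‖Uᴴ Mᴴ M r‖₂² + ‖Γ‖₂² ‖M r‖₂²)`. -/
theorem ols_minus_sketched_sol_bound (n p τ : ℕ) (hp : 0 < p)
    (X U : Matrix (Fin n) (Fin p) ℂ) (V : Matrix (Fin p) (Fin p) ℂ)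
    (Uperp : Matrix (Fin n) (Fin (n - p)) ℂ)
    (s : Fin p → ℝ) (hs : ∀ i, 0 < s i)
    (hU : Uᴴ * U = 1) (hV : Vᴴ * V = 1) (hV' : V * Vᴴ = 1)
    (hUperp : Uperpᴴ * Uperp = 1) (hmix : Uᴴ * Uperp = 0)
    (hcomplete : U * Uᴴ + Uperp * Uperpᴴ = 1)
    (hSVD : X = U * Matrix.diagonal (fun i => (s i : ℂ)) * Vᴴ)
    (hXrank : X.rank = p)
    (M : Matrix (Fin τ) (Fin n) ℂ) (hMU : (M * U).rank = p)
    (y : Fin n → ℂ)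
    (GX : Matrix (Fin p) (Fin n) ℂ) (hGX : IsMoorePenroseInv X GX)
    (GMX : Matrix (Fin p) (Fin τ) ℂ) (hGMX : IsMoorePenroseInv (M * X) GMX)
    (H : Matrix (Fin p) (Fin τ) ℂ) (hH : IsMoorePenroseInv (M * U) H) :
    haveI : Nonempty (Fin p) := ⟨⟨0, hp⟩⟩
    let Γ : Matrix (Fin p) (Fin τ) ℂ := H - (M * U)ᴴ
    let r : Fin n → ℂ := (Uperp * Uperpᴴ) *ᵥ y
    (∑ k, ‖(GX *ᵥ y - GMX *ᵥ (M *ᵥ y)) k‖ ^ 2) ≤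
      (2 / (⨅ i, s i) ^ 2) *
        ((∑ k, ‖((Uᴴ * Mᴴ) *ᵥ (M *ᵥ r)) k‖ ^ 2) +
          ‖Γ‖ ^ 2 * ∑ t, ‖(M *ᵥ r) t‖ ^ 2) := by
  intro Γ r
  haveI : Nonempty (Fin p) := ⟨⟨0, hp⟩⟩
  set Sd : Matrix (Fin p) (Fin p) ℂ := Matrix.diagonal (fun i => (s i : ℂ)) with hSdd
  set Si : Matrix (Fin p) (Fin p) ℂ := Matrix.diagonal (fun i => ((s i : ℂ))⁻¹) with hSi
  have hsne : ∀ i, (s i : ℂ) ≠ 0 := fun i => by exact_mod_cast (hs i).ne'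
  have hS1 : Sd * Si = 1 := by
    rw [hSdd, hSi, Matrix.diagonal_mul_diagonal,
      show (fun i => (s i : ℂ) * ((s i : ℂ))⁻¹) = fun _ => (1:ℂ) from
        funext fun i => mul_inv_cancel₀ (hsne i), Matrix.diagonal_one]
  have hS2 : Si * Sd = 1 := by
    rw [hSdd, hSi, Matrix.diagonal_mul_diagonal,
      show (fun i => ((s i : ℂ))⁻¹ * (s i : ℂ)) = fun _ => (1:ℂ) from
        funext fun i => inv_mul_cancel₀ (hsne i), Matrix.diagonal_one]
  -- GX is V Σ⁻¹ Uᴴ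
  have hGXX : (V * Si * Uᴴ) * X = 1 := by
    rw [hSVD]
    simp only [Matrix.mul_assoc]
    rw [tri_cancel hU, tri_cancel hS2, hV']
  have hXG : X * (V * Si * Uᴴ) = U * Uᴴ := by
    rw [hSVD]
    simp only [Matrix.mul_assoc]
    rw [tri_cancel hV, tri_cancel hS1]
  have hGXeq : GX = V * Si * Uᴴ := by
    refine mp_unique hGX ⟨?_, ?_, ?_, ?_⟩
    · rw [Matrix.mul_assoc, hGXX, Matrix.mul_one]
    · rw [hGXX, Matrix.one_mul]
    · rw [hXG, conjTranspose_mul, conjTranspose_conjTranspose]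
    · rw [hGXX]; simp
  -- H (M U) = 1
  set N : Matrix (Fin τ) (Fin p) ℂ := M * U with hN
  have hP2 : (H * N) * (H * N) = H * N := by
    rw [← Matrix.mul_assoc, hH.2.1]
  have hNP : N * (H * N) = N := by rw [← Matrix.mul_assoc, hH.1]
  have hrk : (H * N).rank = p := by
    refine le_antisymm (Matrix.rank_le_width _) ?_
    calc p = N.rank := hMU.symm
    _ = (N * (H * N)).rank := by rw [hNP]
    _ ≤ (H * N).rank := Matrix.rank_mul_le_right _ _
  have hHMU : H * N = 1 :=
    (isUnit_of_rank_eq _ hrk).mul_left_cancel (by rw [Matrix.mul_one]; exact hP2)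
  -- GMX is V Σ⁻¹ H
  have hMX : M * X = N * (Sd * Vᴴ) := by
    rw [hSVD, hN]
    simp only [Matrix.mul_assoc]
  have hG2MX : (V * Si * H) * (M * X) = 1 := by
    rw [hMX]
    simp only [Matrix.mul_assoc]
    rw [tri_cancel hHMU, tri_cancel hS2, hV']
  have hMXG2 : (M * X) * (V * Si * H) = N * H := by
    rw [hMX]
    simp only [Matrix.mul_assoc]
    rw [tri_cancel hV, tri_cancel hS1]
  have hGMXeq : GMX = V * Si * H := by
    refine mp_unique hGMX ⟨?_, ?_, ?_, ?_⟩
    · rw [Matrix.mul_assoc, hG2MX, Matrix.mul_one]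
    · rw [hG2MX, Matrix.one_mul]
    · rw [hMXG2]; exact hH.2.2.1
    · rw [hG2MX]; simp
  -- the difference vector
  set a : Fin p → ℂ := (Uᴴ * Mᴴ) *ᵥ (M *ᵥ r) with ha
  set b : Fin p → ℂ := Γ *ᵥ (M *ᵥ r) with hb
  have hy : y = (U * Uᴴ) *ᵥ y + r := by
    have h := congrArg (· *ᵥ y) hcomplete
    simp only [Matrix.add_mulVec, Matrix.one_mulVec] at h
    exact h.symm
  have hHsplit : H = Γ + Nᴴ := by
    show H = H - Nᴴ + Nᴴ
    abel
  have h5 : H *ᵥ (M *ᵥ y) = Uᴴ *ᵥ y + (a + b) := by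
    conv_lhs => rw [hy]
    rw [Matrix.mulVec_add, Matrix.mulVec_add, Matrix.mulVec_mulVec, Matrix.mulVec_mulVec,
      show H * M * (U * Uᴴ) = Uᴴ from by
        rw [Matrix.mul_assoc, show M * (U * Uᴴ) = N * Uᴴ from by rw [hN, ← Matrix.mul_assoc],
          tri_cancel hHMU]]
    congr 1
    rw [ha, hb]
    conv_lhs => rw [hHsplit, Matrix.add_mulVec]
    rw [hN, conjTranspose_mul]
    exact add_comm _ _
  have hd : GX *ᵥ y - GMX *ᵥ (M *ᵥ y) = (V * Si) *ᵥ (-(a + b)) := by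
    rw [hGXeq, hGMXeq, ← Matrix.mulVec_mulVec (v := y), ← Matrix.mulVec_mulVec (v := M *ᵥ y),
      ← Matrix.mulVec_sub, h5]
    congr 1
    abel
  -- the infimum of singular values
  set σ : ℝ := ⨅ i, s i with hσ
  have hσle : ∀ i, σ ≤ s i := fun i => ciInf_le (Set.Finite.bddBelow (Set.finite_range s)) i
  have hσpos : 0 < σ := by
    obtain ⟨i0, hi0⟩ := Finite.exists_min s
    have : σ = s i0 := le_antisymm (ciInf_le (Set.Finite.bddBelow (Set.finite_range s)) i0)
      (le_ciInf hi0)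
    rw [this]; exact hs i0
  -- pointwise bound
  have hpt : ∀ k, ‖(Si *ᵥ (-(a + b))) k‖^2 ≤ σ⁻¹^2 * (2 * ‖a k‖^2 + 2 * ‖b k‖^2) := by
    intro k
    rw [hSi, Matrix.mulVec_diagonal]
    refine pointwise_bound hσpos (hσle k) (a k) (b k) _ ?_
    simp only [Pi.neg_apply, Pi.add_apply, norm_neg]
    exact norm_add_le _ _
  calc (∑ k, ‖(GX *ᵥ y - GMX *ᵥ (M *ᵥ y)) k‖ ^ 2)
      = ∑ k, ‖(Si *ᵥ (-(a + b))) k‖ ^ 2 := by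
        rw [hd, ← Matrix.mulVec_mulVec]
        exact isometry_sum hV _
    _ ≤ ∑ k, σ⁻¹^2 * (2 * ‖a k‖^2 + 2 * ‖b k‖^2) :=
        Finset.sum_le_sum fun k _ => hpt k
    _ = (2 / σ^2) * ((∑ k, ‖a k‖^2) + ∑ k, ‖b k‖^2) := by
        rw [← Finset.mul_sum, Finset.sum_add_distrib, ← Finset.mul_sum, ← Finset.mul_sum]
        field_simp
    _ ≤ (2 / σ^2) * ((∑ k, ‖a k‖^2) + ‖Γ‖^2 * ∑ t, ‖(M *ᵥ r) t‖^2) := by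
        apply mul_le_mul_of_nonneg_left _ (by positivity)
        exact add_le_add (le_refl _) (by rw [hb]; exact opnorm_sum Γ (M *ᵥ r))
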